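/- The set of packed words with a fixed standardization sigma in S_n is in bijection with the subsets of A(sigma), the set of advances of sigma (values i such that i+1 appears to the right of i in sigma); hence this set of words has cardinality 2^{|A(sigma)|} and carries a natural boolean lattice structure under the strong refinement order. -/

import Mathlib

open scoped Classical

/-- A word is packed if its letters are exactly `1, ..., k` for some `k`. -/
def IsPackedF {n : ℕ} (w : Fin n → ℕ) : Prop :=
  (∀ i, 0 < w i) ∧ ∀ i, ∀ m, 0 < m → m < w i → ∃ j, w j = m

/-- The standardization of a word: the (1-based one-line values of the) permutation
with the same inversions, ties broken left to right. -/
noncomputable def stdF {n : ℕ} (w : Fin n → ℕ) : Fin n → ℕ := fun i =>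
  (Finset.univ.filter fun j => w j < w i ∨ (w j = w i ∧ j ≤ i)).card

/-- The advances of `σ`: values `i` (0-based) such that `i + 1` appears to the
right of `i` in the one-line notation of `σ`. -/
noncomputable def advances {n : ℕ} (σ : Equiv.Perm (Fin n)) : Finset (Fin n) :=
  Finset.univ.filter fun i : Fin n =>
    ∃ h : (i : ℕ) + 1 < n, σ⁻¹ i < σ⁻¹ ⟨(i : ℕ) + 1, h⟩

theorem Equiv.Perm.apply_inv_self {α : Type*} (f : Equiv.Perm α) (x : α) : f (f⁻¹ x) = x :=
  Equiv.apply_symm_apply f x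

theorem Equiv.Perm.inv_apply_self {α : Type*} (f : Equiv.Perm α) (x : α) : f⁻¹ (f x) = x :=
  Equiv.symm_apply_apply f x

namespace Stmt15Aux

variable {n : ℕ}

noncomputable def cfun (P : Fin n → Prop) (i : ℕ) : ℕ :=
  (Finset.univ.filter fun j : Fin n => (j : ℕ) < i ∧ P j).card

lemma cfun_zero (P : Fin n → Prop) : cfun P 0 = 0 := by
  simp [cfun]

lemma cfun_succ (P : Fin n → Prop) (i : ℕ) (h : i < n) :
    cfun P (i + 1) = cfun P i + (if P ⟨i, h⟩ then 1 else 0) := by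
  classical
  have hsplit : (Finset.univ.filter fun j : Fin n => (j : ℕ) < i + 1 ∧ P j)
      = (Finset.univ.filter fun j : Fin n => (j : ℕ) < i ∧ P j) ∪
        (Finset.univ.filter fun j : Fin n => j = ⟨i, h⟩ ∧ P j) := by
    ext j
    simp only [Finset.mem_filter, Finset.mem_union, Finset.mem_univ, true_and]
    constructor
    · rintro ⟨hj, hp⟩
      rcases Nat.lt_succ_iff_lt_or_eq.mp hj with h' | h'
      · exact Or.inl ⟨h', hp⟩
      · exact Or.inr ⟨Fin.ext h', hp⟩
    · rintro (⟨hj, hp⟩ | ⟨hj, hp⟩)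
      · exact ⟨Nat.lt_succ_of_lt hj, hp⟩
      · exact ⟨by simp [hj], hp⟩
  have hdisj : Disjoint (Finset.univ.filter fun j : Fin n => (j : ℕ) < i ∧ P j)
      (Finset.univ.filter fun j : Fin n => j = ⟨i, h⟩ ∧ P j) := by
    rw [Finset.disjoint_left]
    intro j hj hj'
    simp only [Finset.mem_filter, Finset.mem_univ, true_and] at hj hj'
    rw [hj'.1] at hj
    exact absurd hj.1 (lt_irrefl i)
  rw [cfun, cfun, hsplit, Finset.card_union_of_disjoint hdisj]
  congr 1
  by_cases hp : P ⟨i, h⟩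
  · rw [if_pos hp]
    have : (Finset.univ.filter fun j : Fin n => j = ⟨i, h⟩ ∧ P j) = {⟨i, h⟩} := by
      ext j
      simp only [Finset.mem_filter, Finset.mem_univ, true_and, Finset.mem_singleton]
      constructor
      · exact fun h => h.1
      · rintro rfl; exact ⟨rfl, hp⟩
    rw [this, Finset.card_singleton]
  · rw [if_neg hp]
    have : (Finset.univ.filter fun j : Fin n => j = ⟨i, h⟩ ∧ P j) = ∅ := by
      ext j
      simp only [Finset.mem_filter, Finset.mem_univ, true_and, Finset.notMem_empty, iff_false]
      rintro ⟨rfl, hpj⟩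
      exact hp hpj
    rw [this, Finset.card_empty]

lemma cfun_stab (P : Fin n → Prop) (i : ℕ) (h : n ≤ i) :
    cfun P (i + 1) = cfun P i := by
  unfold cfun
  congr 1
  ext j
  simp only [Finset.mem_filter, Finset.mem_univ, true_and]
  have := j.isLt
  constructor
  · rintro ⟨_, hp⟩; exact ⟨by omega, hp⟩
  · rintro ⟨_, hp⟩; exact ⟨by omega, hp⟩

lemma cfun_succ_le (P : Fin n → Prop) (i : ℕ) :
    cfun P (i + 1) ≤ cfun P i + 1 := by
  by_cases h : i < n
  · rw [cfun_succ P i h]; split <;> omega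
  · rw [cfun_stab P i (by omega)]; omega

lemma cfun_mono (P : Fin n → Prop) {i i' : ℕ} (h : i ≤ i') : cfun P i ≤ cfun P i' := by
  apply Finset.card_le_card
  intro j hj
  simp only [Finset.mem_filter, Finset.mem_univ, true_and] at hj ⊢
  exact ⟨lt_of_lt_of_le hj.1 h, hj.2⟩

lemma cfun_le (P : Fin n → Prop) (i : ℕ) : cfun P i ≤ i := by
  induction i with
  | zero => simp [cfun_zero]
  | succ i ih => have := cfun_succ_le P i; omega

lemma cfun_ivt (P : Fin n → Prop) (i : ℕ) :
    ∀ d, d ≤ cfun P i → ∃ i', i' ≤ i ∧ cfun P i' = d := by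
  induction i with
  | zero => intro d hd; rw [cfun_zero] at hd; exact ⟨0, le_refl 0, by rw [cfun_zero]; omega⟩
  | succ i ih =>
    intro d hd
    by_cases h : d ≤ cfun P i
    · obtain ⟨i', hi', he⟩ := ih d h
      exact ⟨i', by omega, he⟩
    · have := cfun_succ_le P i
      exact ⟨i + 1, le_refl _, by omega⟩

/-- The strict total order with same inversions, ties left to right. -/
def R (w : Fin n → ℕ) (p q : Fin n) : Prop := w p < w q ∨ (w p = w q ∧ p < q)

lemma R_irrefl (w : Fin n → ℕ) (p : Fin n) : ¬ R w p p := by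
  rintro (h | ⟨_, h⟩) <;> exact absurd h (lt_irrefl _)

lemma R_trans (w : Fin n → ℕ) {p q r : Fin n} (h1 : R w p q) (h2 : R w q r) : R w p r := by
  rcases h1 with h1 | ⟨h1, h1'⟩ <;> rcases h2 with h2 | ⟨h2, h2'⟩
  · exact Or.inl (h1.trans h2)
  · exact Or.inl (h2 ▸ h1)
  · exact Or.inl (h1 ▸ h2)
  · exact Or.inr ⟨h1.trans h2, h1'.trans h2'⟩

lemma R_trichotomy (w : Fin n → ℕ) (p q : Fin n) : R w p q ∨ p = q ∨ R w q p := by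
  rcases lt_trichotomy (w p) (w q) with h | h | h
  · exact Or.inl (Or.inl h)
  · rcases lt_trichotomy p q with h' | h' | h'
    · exact Or.inl (Or.inr ⟨h, h'⟩)
    · exact Or.inr (Or.inl h')
    · exact Or.inr (Or.inr (Or.inr ⟨h.symm, h'⟩))
  · exact Or.inr (Or.inr (Or.inl h))

noncomputable def rank (w : Fin n → ℕ) (p : Fin n) : ℕ :=
  (Finset.univ.filter fun q => R w q p).card

lemma stdF_eq_rank (w : Fin n → ℕ) (p : Fin n) : stdF w p = rank w p + 1 := by
  have : (Finset.univ.filter fun j => w j < w p ∨ (w j = w p ∧ j ≤ p))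
      = insert p (Finset.univ.filter fun q => R w q p) := by
    ext j
    simp only [Finset.mem_filter, Finset.mem_univ, true_and, Finset.mem_insert]
    simp only [R]
    constructor
    · rintro (h | ⟨h, h'⟩)
      · exact Or.inr (Or.inl h)
      · rcases lt_or_eq_of_le h' with h'' | h''
        · exact Or.inr (Or.inr ⟨h, h''⟩)
        · exact Or.inl h''
    · rintro (rfl | h | ⟨h, h'⟩)
      · exact Or.inr ⟨rfl, le_refl _⟩
      · exact Or.inl h
      · exact Or.inr ⟨h, le_of_lt h'⟩
  rw [stdF, this, Finset.card_insert_of_notMem (by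
    simp only [Finset.mem_filter, Finset.mem_univ, true_and]
    exact R_irrefl w p)]
  rfl

lemma rank_lt (w : Fin n → ℕ) {p q : Fin n} (h : R w p q) : rank w p < rank w q := by
  have hsub : insert p (Finset.univ.filter fun r => R w r p)
      ⊆ (Finset.univ.filter fun r => R w r q) := by
    intro r hr
    simp only [Finset.mem_insert, Finset.mem_filter, Finset.mem_univ, true_and] at hr ⊢
    rcases hr with rfl | hr
    · exact h
    · exact R_trans w hr h
  have := Finset.card_le_card hsub
  rw [Finset.card_insert_of_notMem (by
    simp only [Finset.mem_filter, Finset.mem_univ, true_and]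
    exact R_irrefl w p)] at this
  exact lt_of_lt_of_le (Nat.lt_succ_self _) this

lemma std_iff (σ : Equiv.Perm (Fin n)) (w : Fin n → ℕ) :
    (∀ p, stdF w p = (σ p : ℕ) + 1) ↔ ∀ p q, R w p q ↔ σ p < σ q := by
  constructor
  · intro h p q
    have hr : ∀ r, rank w r = (σ r : ℕ) := by
      intro r
      have := h r
      rw [stdF_eq_rank] at this
      omega
    constructor
    · intro hR
      have := rank_lt w hR
      rw [hr p, hr q] at this
      exact this
    · intro hlt
      rcases R_trichotomy w p q with hR | rfl | hR
      · exact hR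
      · exact absurd hlt (lt_irrefl _)
      · have := rank_lt w hR
        rw [hr p, hr q] at this
        have : (σ p : ℕ) < σ q := hlt
        omega
  · intro hR p
    rw [stdF_eq_rank, rank]
    congr 1
    have : (Finset.univ.filter fun q => R w q p) = (Finset.Iio (σ p)).image σ.symm := by
      ext q
      simp only [Finset.mem_filter, Finset.mem_univ, true_and, Finset.mem_image,
        Finset.mem_Iio]
      constructor
      · intro hq
        exact ⟨σ q, (hR q p).mp hq, by simp⟩
      · rintro ⟨r, hr, rfl⟩
        exact (hR _ p).mpr (by simpa using hr)
    rw [this, Finset.card_image_of_injective _ (Equiv.injective _), Fin.card_Iio]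

/-! ### The bijection -/

variable (σ : Equiv.Perm (Fin n))

/-- The condition "step `j` is a rise", given chosen subset `S`. -/
def PS (S : Finset (Fin n)) (j : Fin n) : Prop :=
  j ∉ advances σ ∨ j ∈ S

/-- The packed word associated to a subset of the advances. -/
noncomputable def Phi (S : Finset (Fin n)) (p : Fin n) : Fin (n + 1) :=
  ⟨1 + cfun (PS σ S) (σ p), by
    have h1 := cfun_le (PS σ S) (σ p)
    have h2 := (σ p).isLt
    omega⟩

/-- The subset of the advances associated to a packed word. -/
noncomputable def Fmap (u : Fin n → Fin (n + 1)) : Finset (Fin n) :=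
  (advances σ).filter fun i => ∃ h : (i : ℕ) + 1 < n,
    (u (σ⁻¹ ⟨(i : ℕ) + 1, h⟩) : ℕ) = (u (σ⁻¹ i) : ℕ) + 1

lemma step_lemma (S : Finset (Fin n)) (i : ℕ) (hi : i + 1 < n)
    (hc : cfun (PS σ S) i = cfun (PS σ S) (i + 1)) :
    σ⁻¹ (⟨i, by omega⟩ : Fin n) < σ⁻¹ (⟨i + 1, hi⟩ : Fin n) := by
  have hi' : i < n := by omega
  have hstep := cfun_succ (PS σ S) i hi'
  have hnp : ¬ PS σ S ⟨i, hi'⟩ := by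
    intro hp
    rw [if_pos hp] at hstep
    omega
  rw [PS] at hnp
  push_neg at hnp
  have hA : (⟨i, hi'⟩ : Fin n) ∈ advances σ := hnp.1
  rw [advances, Finset.mem_filter] at hA
  obtain ⟨-, h', hlt⟩ := hA
  exact hlt

lemma chain_lemma (S : Finset (Fin n)) {a b : Fin n} (hab : a < b)
    (hc : cfun (PS σ S) a = cfun (PS σ S) b) : σ⁻¹ a < σ⁻¹ b := by
  have hab' : (a : ℕ) < (b : ℕ) := hab
  have hbn := b.isLt
  -- induction on the gap
  suffices H : ∀ d (i : ℕ) (h : i + d < n), 0 < d →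
      cfun (PS σ S) i = cfun (PS σ S) (i + d) →
      σ⁻¹ (⟨i, by omega⟩ : Fin n) < σ⁻¹ (⟨i + d, h⟩ : Fin n) by
    have h1 : (a : ℕ) + ((b : ℕ) - (a : ℕ)) < n := by omega
    have key := H ((b : ℕ) - (a : ℕ)) (a : ℕ) h1 (by omega) (by
      have e : (a : ℕ) + ((b : ℕ) - (a : ℕ)) = (b : ℕ) := by omega
      rw [e]
      exact hc)
    have e1 : (⟨(a : ℕ), by omega⟩ : Fin n) = a := Fin.eta a _
    have e2 : (⟨(a : ℕ) + ((b : ℕ) - (a : ℕ)), h1⟩ : Fin n) = b := by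
      rw [Fin.ext_iff]
      simp only [Fin.val_mk]
      omega
    rwa [e1, e2] at key
  intro d
  induction d with
  | zero => intro i h hd; exact absurd hd (lt_irrefl 0)
  | succ d ih =>
    intro i h hd hc'
    by_cases hd0 : d = 0
    · subst hd0
      exact step_lemma σ S i h hc'
    · have h1 : i + d < n := by omega
      have hm1 := cfun_mono (PS σ S) (show i ≤ i + d by omega)
      have hm2 := cfun_mono (PS σ S) (show i + d ≤ i + (d + 1) by omega)
      have hc1 : cfun (PS σ S) i = cfun (PS σ S) (i + d) := by omega
      have hc2 : cfun (PS σ S) (i + d) = cfun (PS σ S) (i + d + 1) := by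
        have : i + (d + 1) = i + d + 1 := by omega
        rw [this] at hc'
        omega
      have t1 := ih i h1 (by omega) hc1
      have t2 := step_lemma σ S (i + d) (by omega) hc2
      have e : (⟨i + (d + 1), h⟩ : Fin n) = ⟨i + d + 1, by omega⟩ := by
        rw [Fin.ext_iff]
        simp only [Fin.val_mk]
        omega
      rw [e]
      exact lt_trans t1 t2

lemma Phi_val (S : Finset (Fin n)) (p : Fin n) :
    ((Phi σ S p : Fin (n + 1)) : ℕ) = 1 + cfun (PS σ S) (σ p) := rfl

lemma Phi_packed (S : Finset (Fin n)) : IsPackedF (fun p => ((Phi σ S p : Fin (n+1)) : ℕ)) := by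
  constructor
  · intro p
    show 0 < 1 + cfun (PS σ S) (σ p)
    omega
  · intro p m hm hlt
    have hlt' : m < 1 + cfun (PS σ S) (σ p) := hlt
    obtain ⟨i', hi'le, hi'eq⟩ := cfun_ivt (PS σ S) (σ p) (m - 1) (by omega)
    have hi'n : i' < n := lt_of_le_of_lt hi'le (σ p).isLt
    refine ⟨σ⁻¹ ⟨i', hi'n⟩, ?_⟩
    show 1 + cfun (PS σ S) (σ (σ⁻¹ ⟨i', hi'n⟩)) = m
    rw [Equiv.Perm.apply_inv_self]
    show 1 + cfun (PS σ S) i' = m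
    omega

lemma Phi_R (S : Finset (Fin n)) (p q : Fin n) :
    R (fun r => ((Phi σ S r : Fin (n+1)) : ℕ)) p q ↔ σ p < σ q := by
  constructor
  · intro hr
    rcases hr with h | ⟨h, hpq⟩
    · have h : 1 + cfun (PS σ S) (σ p) < 1 + cfun (PS σ S) (σ q) := h
      by_contra hn
      rcases lt_trichotomy (σ p) (σ q) with h' | h' | h'
      · exact hn h'
      · rw [h'] at h; omega
      · have : (σ q : ℕ) ≤ (σ p : ℕ) := le_of_lt h'
        have := cfun_mono (PS σ S) this
        omega
    · have h : 1 + cfun (PS σ S) (σ p) = 1 + cfun (PS σ S) (σ q) := h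
      rcases lt_trichotomy (σ p) (σ q) with h' | h' | h'
      · exact h'
      · exact absurd (σ.injective h') (ne_of_lt hpq)
      · have hc : cfun (PS σ S) (σ q) = cfun (PS σ S) (σ p) := by omega
        have := chain_lemma σ S h' hc
        rw [Equiv.Perm.inv_apply_self, Equiv.Perm.inv_apply_self] at this
        exact absurd hpq (asymm this)
  · intro h
    have hle : cfun (PS σ S) (σ p) ≤ cfun (PS σ S) (σ q) :=
      cfun_mono (PS σ S) (le_of_lt h)
    rcases lt_or_eq_of_le hle with h' | h'
    · exact Or.inl (show 1 + cfun (PS σ S) (σ p) < 1 + cfun (PS σ S) (σ q) by omega)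
    · refine Or.inr ⟨show 1 + cfun (PS σ S) (σ p) = 1 + cfun (PS σ S) (σ q) by omega, ?_⟩
      have := chain_lemma σ S h h'
      rwa [Equiv.Perm.inv_apply_self, Equiv.Perm.inv_apply_self] at this

lemma Fmap_Phi (S : Finset (Fin n)) (hS : S ⊆ advances σ) : Fmap σ (Phi σ S) = S := by
  ext i
  rw [Fmap, Finset.mem_filter]
  have hi : (i : ℕ) < n := i.isLt
  have hstep := cfun_succ (PS σ S) i hi
  have heta : (⟨(i : ℕ), hi⟩ : Fin n) = i := Fin.eta i hi
  rw [heta] at hstep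
  constructor
  · rintro ⟨hA, h1, heq⟩
    rw [Phi_val, Phi_val, Equiv.Perm.apply_inv_self, Equiv.Perm.apply_inv_self] at heq
    have heq' : 1 + cfun (PS σ S) ((i : ℕ) + 1) = 1 + cfun (PS σ S) (i : ℕ) + 1 := heq
    have hp : PS σ S i := by
      by_contra hnp
      rw [if_neg hnp] at hstep
      omega
    rcases hp with hp | hp
    · exact absurd hA hp
    · exact hp
  · intro hiS
    have hA : i ∈ advances σ := hS hiS
    refine ⟨hA, ?_⟩
    have h1 : (i : ℕ) + 1 < n := by
      rw [advances, Finset.mem_filter] at hA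
      exact hA.2.choose
    refine ⟨h1, ?_⟩
    rw [Phi_val, Phi_val, Equiv.Perm.apply_inv_self, Equiv.Perm.apply_inv_self]
    show 1 + cfun (PS σ S) ((i : ℕ) + 1) = 1 + cfun (PS σ S) (i : ℕ) + 1
    have hps : PS σ S i := Or.inr hiS
    rw [if_pos hps] at hstep
    omega

lemma Phi_Fmap (u : Fin n → Fin (n + 1))
    (hpack : IsPackedF (fun i => (u i : ℕ)))
    (hstd : ∀ i, stdF (fun j => (u j : ℕ)) i = (σ i : ℕ) + 1) :
    Phi σ (Fmap σ u) = u := by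
  have hR := (std_iff σ (fun j => (u j : ℕ))).mp hstd
  have claim : ∀ i (h : i < n), (u (σ⁻¹ ⟨i, h⟩) : ℕ) = 1 + cfun (PS σ (Fmap σ u)) i := by
    intro i
    induction i with
    | zero =>
      intro h0
      rw [cfun_zero]
      have hpos : 0 < (u (σ⁻¹ ⟨0, h0⟩) : ℕ) := hpack.1 _
      by_contra hne
      have h2 : 2 ≤ (u (σ⁻¹ ⟨0, h0⟩) : ℕ) := by omega
      obtain ⟨q, hq⟩ := hpack.2 (σ⁻¹ ⟨0, h0⟩) 1 one_pos
        (show (1 : ℕ) < (u (σ⁻¹ ⟨0, h0⟩) : ℕ) by omega)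
      have hq' : (u q : ℕ) = 1 := hq
      have hRq : R (fun j => (u j : ℕ)) q (σ⁻¹ ⟨0, h0⟩) :=
        Or.inl (show (u q : ℕ) < (u (σ⁻¹ ⟨0, h0⟩) : ℕ) by omega)
      have := (hR _ _).mp hRq
      rw [Equiv.Perm.apply_inv_self] at this
      have : (σ q : ℕ) < 0 := this
      omega
    | succ i ih =>
      intro h1
      have hi : i < n := by omega
      have iha := ih hi
      have f1 : R (fun j => (u j : ℕ)) (σ⁻¹ ⟨i, hi⟩) (σ⁻¹ ⟨i + 1, h1⟩) := by
        apply (hR _ _).mpr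
        rw [Equiv.Perm.apply_inv_self, Equiv.Perm.apply_inv_self]
        exact Fin.mk_lt_mk.mpr (by omega)
      have f2 : (u (σ⁻¹ ⟨i + 1, h1⟩) : ℕ) ≤ (u (σ⁻¹ ⟨i, hi⟩) : ℕ) + 1 := by
        by_contra hgt
        push_neg at hgt
        have hpos : 0 < (u (σ⁻¹ ⟨i, hi⟩) : ℕ) := hpack.1 _
        obtain ⟨q, hq⟩ := hpack.2 (σ⁻¹ ⟨i + 1, h1⟩) ((u (σ⁻¹ ⟨i, hi⟩) : ℕ) + 1)
          (by omega) (show (u (σ⁻¹ ⟨i, hi⟩) : ℕ) + 1 < (u (σ⁻¹ ⟨i + 1, h1⟩) : ℕ) by omega)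
        have hq' : (u q : ℕ) = (u (σ⁻¹ ⟨i, hi⟩) : ℕ) + 1 := hq
        have g1 : R (fun j => (u j : ℕ)) (σ⁻¹ ⟨i, hi⟩) q :=
          Or.inl (show (u (σ⁻¹ ⟨i, hi⟩) : ℕ) < (u q : ℕ) by omega)
        have g2 : R (fun j => (u j : ℕ)) q (σ⁻¹ ⟨i + 1, h1⟩) :=
          Or.inl (show (u q : ℕ) < (u (σ⁻¹ ⟨i + 1, h1⟩) : ℕ) by omega)
        have l1 := (hR _ _).mp g1
        have l2 := (hR _ _).mp g2
        rw [Equiv.Perm.apply_inv_self] at l1 l2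
        have l1' : i < (σ q : ℕ) := l1
        have l2' : (σ q : ℕ) < i + 1 := l2
        omega
      have hstep := cfun_succ (PS σ (Fmap σ u)) i hi
      by_cases hA : (⟨i, hi⟩ : Fin n) ∈ advances σ
      · by_cases hb : (u (σ⁻¹ ⟨i + 1, h1⟩) : ℕ) = (u (σ⁻¹ ⟨i, hi⟩) : ℕ) + 1
        · have hmem : (⟨i, hi⟩ : Fin n) ∈ Fmap σ u := by
            rw [Fmap, Finset.mem_filter]
            exact ⟨hA, h1, hb⟩
          have hps : PS σ (Fmap σ u) ⟨i, hi⟩ := Or.inr hmem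
          rw [hstep, if_pos hps]
          omega
        · have hnmem : (⟨i, hi⟩ : Fin n) ∉ Fmap σ u := by
            rw [Fmap, Finset.mem_filter]
            rintro ⟨-, h', heq⟩
            exact hb heq
          have hae : (u (σ⁻¹ ⟨i + 1, h1⟩) : ℕ) = (u (σ⁻¹ ⟨i, hi⟩) : ℕ) := by
            rcases f1 with h | ⟨h, -⟩
            · have h' : (u (σ⁻¹ ⟨i, hi⟩) : ℕ) < (u (σ⁻¹ ⟨i + 1, h1⟩) : ℕ) := h
              omega
            · have h' : (u (σ⁻¹ ⟨i, hi⟩) : ℕ) = (u (σ⁻¹ ⟨i + 1, h1⟩) : ℕ) := h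
              omega
          have hps : ¬ PS σ (Fmap σ u) ⟨i, hi⟩ := by
            rintro (hnot | hmem')
            · exact hnot hA
            · exact hnmem hmem'
          rw [hstep, if_neg hps]
          omega
      · have hnlt : ¬ (σ⁻¹ (⟨i, hi⟩ : Fin n) < σ⁻¹ (⟨i + 1, h1⟩ : Fin n)) := by
          intro hlt
          apply hA
          rw [advances, Finset.mem_filter]
          exact ⟨Finset.mem_univ _, h1, hlt⟩
        have hab : (u (σ⁻¹ ⟨i, hi⟩) : ℕ) < (u (σ⁻¹ ⟨i + 1, h1⟩) : ℕ) := by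
          rcases f1 with h | ⟨-, h⟩
          · exact h
          · exact absurd h hnlt
        have hps : PS σ (Fmap σ u) ⟨i, hi⟩ := Or.inl hA
        rw [hstep, if_pos hps]
        omega
  funext p
  apply Fin.ext
  rw [Phi_val]
  have := claim (σ p) (σ p).isLt
  rw [Fin.eta, Equiv.Perm.inv_apply_self] at this
  omega

end Stmt15Aux

open Stmt15Aux in
/-- The packed words with standardization `σ` are in bijection with the subsets of
the set of advances of `σ`; in particular there are `2^{|A(σ)|}` of them. -/
theorem stmt15 (n : ℕ) (σ : Equiv.Perm (Fin n)) :
    (Finset.univ.filter fun u : Fin n → Fin (n + 1) =>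
        IsPackedF (fun i => (u i : ℕ)) ∧
        ∀ i, stdF (fun j => (u j : ℕ)) i = (σ i : ℕ) + 1).card =
      2 ^ (advances σ).card := by
  classical
  rw [← Finset.card_powerset]
  refine Finset.card_nbij' (Fmap σ) (Phi σ) ?_ ?_ ?_ ?_
  · intro u hu
    exact Finset.mem_powerset.mpr (Finset.filter_subset _ _)
  · intro S hS
    rw [Finset.mem_coe, Finset.mem_filter]
    exact ⟨Finset.mem_univ _, Phi_packed σ S, (std_iff σ _).mpr (Phi_R σ S)⟩
  · intro u hu
    rw [Finset.mem_coe, Finset.mem_filter] at hu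
    exact Phi_Fmap σ u hu.2.1 hu.2.2
  · intro S hS
    exact Fmap_Phi σ S (Finset.mem_powerset.mp hS)
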